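/- Let T be the graph obtained from the star K_{1,n} by subdividing every edge exactly twice, and let G = T², the square of T. Then in any 3⁺-guidance system for G, some vertex has outdegree at least (n-1)/2. -/

import Mathlib

open SimpleGraph

variable {V : Type*}

/-- `H` is a partial orientation of `G`: every directed edge of `H` projects to an edge of `G`. -/
def IsPartialOrientation (G : SimpleGraph V) (H : V → V → Prop) : Prop :=
  ∀ ⦃u v⦄, H u v → G.Adj u v

/-- `oball H v a` is the set of vertices reachable from `v` in `H` by a directed path
of length at most `a`. -/
def oball (H : V → V → Prop) (v : V) : ℕ → Set V
  | 0 => {v}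
  | a + 1 => oball H v a ∪ {w | ∃ x ∈ oball H v a, H x w}

/-- `gate G u v` is the set of neighbors of `u` at distance `dist u v - 1` from `v`,
i.e. the possible second vertices of shortest `u`-`v` paths. -/
def gate (G : SimpleGraph V) (u v : V) : Set V :=
  {y | G.Adj u y ∧ G.dist y v = G.dist u v - 1}

/-- `H` is a weak `r`-guidance system of `G`: for distinct `u,v` at distance `ℓ ≤ r`
there are `a + b = ℓ - 1` and an edge of `G` between `oball H u a` and `oball H v b`. -/
def IsWeakGuidance (G : SimpleGraph V) (H : V → V → Prop) (r : ℕ) : Prop :=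
  ∀ u v : V, u ≠ v → G.Reachable u v → G.dist u v ≤ r →
    ∃ a b : ℕ, a + b = G.dist u v - 1 ∧ ∃ x ∈ oball H u a, ∃ y ∈ oball H v b, G.Adj x y

/-- Gate formulation of weak `r`-guidance systems: for `u,v` at distance `ℓ` with
`2 ≤ ℓ ≤ r`, `u` has an outneighbor in `gate G u v` or `v` has one in `gate G v u`. -/
def IsWeakGuidanceGate (G : SimpleGraph V) (H : V → V → Prop) (r : ℕ) : Prop :=
  ∀ u v : V, 2 ≤ G.dist u v → G.dist u v ≤ r →
    (∃ y ∈ gate G u v, H u y) ∨ (∃ y ∈ gate G v u, H v y)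

/-- The outdegree of `u` in the partial orientation `H`. -/
noncomputable def outdeg (H : V → V → Prop) (u : V) : ℕ := {v | H u v}.ncard

/-- `H` is an `r⁺`-guidance system of `G`. -/
def IsPlusGuidance (G : SimpleGraph V) (H : V → V → Prop) (r : ℕ) : Prop :=
  ∀ u v : V, 2 ≤ G.dist u v → G.dist u v ≤ r →
    ∃ a b : ℕ, a + b = G.dist u v ∧ (oball H u a ∩ oball H v b).Nonempty

/-- The `k`-distance power of `G`. -/
def distPower (G : SimpleGraph V) (k : ℕ) : SimpleGraph V where
  Adj u v := u ≠ v ∧ G.Reachable u v ∧ G.dist u v ≤ k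
  symm := by
    constructor
    intro u v h
    exact ⟨h.1.symm, h.2.1.symm, by rw [G.dist_comm]; exact h.2.2⟩
  loopless := by constructor; intro u h; exact h.1 rfl

/-- The star `K_{1,n}` with every edge subdivided exactly twice: the center is `none`,
and for each `i : Fin n` the path `none — (i,0) — (i,1) — (i,2)` where `(i,2)` is a leaf. -/
def starSubdiv (n : ℕ) : SimpleGraph (Option (Fin n × Fin 3)) :=
  SimpleGraph.fromRel (fun a b =>
    (∃ i, a = none ∧ b = some (i, 0)) ∨
    (∃ i, a = some (i, 0) ∧ b = some (i, 1)) ∨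
    (∃ i, a = some (i, 1) ∧ b = some (i, 2)))

lemma T_adj_none (n : ℕ) (x) :
    (starSubdiv n).Adj none x ↔ ∃ i, x = some (i, 0) := by
  simp only [starSubdiv, SimpleGraph.fromRel_adj]
  constructor
  · rintro ⟨hne, h | h⟩ <;>
      rcases h with ⟨j, h1, h2⟩ | ⟨j, h1, h2⟩ | ⟨j, h1, h2⟩ <;> simp_all
  · rintro ⟨i, rfl⟩
    simp

lemma T_adj_zero (n : ℕ) (i : Fin n) (x) :
    (starSubdiv n).Adj (some (i, 0)) x ↔ x = none ∨ x = some (i, 1) := by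
  simp only [starSubdiv, SimpleGraph.fromRel_adj]
  constructor
  · rintro ⟨hne, h | h⟩ <;>
      rcases h with ⟨j, h1, h2⟩ | ⟨j, h1, h2⟩ | ⟨j, h1, h2⟩ <;> simp_all
  · rintro (rfl | rfl) <;> simp

lemma T_adj_mid (n : ℕ) (i : Fin n) (x) :
    (starSubdiv n).Adj (some (i, 1)) x ↔ x = some (i, 0) ∨ x = some (i, 2) := by
  simp only [starSubdiv, SimpleGraph.fromRel_adj]
  constructor
  · rintro ⟨hne, h | h⟩ <;>
      rcases h with ⟨j, h1, h2⟩ | ⟨j, h1, h2⟩ | ⟨j, h1, h2⟩ <;> simp_all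
  · rintro (rfl | rfl) <;> simp

lemma T_adj_leaf (n : ℕ) (i : Fin n) (x) :
    (starSubdiv n).Adj (some (i, 2)) x ↔ x = some (i, 1) := by
  simp only [starSubdiv, SimpleGraph.fromRel_adj]
  constructor
  · rintro ⟨hne, h | h⟩ <;>
      rcases h with ⟨j, h1, h2⟩ | ⟨j, h1, h2⟩ | ⟨j, h1, h2⟩ <;> simp_all
  · rintro rfl
    simp

lemma walk_two {G : SimpleGraph V} {u v : V} (p : G.Walk u v) (h : p.length ≤ 2) :
    u = v ∨ G.Adj u v ∨ ∃ w, G.Adj u w ∧ G.Adj w v := by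
  match p with
  | .nil => exact Or.inl rfl
  | .cons h1 .nil => exact Or.inr (Or.inl h1)
  | .cons h1 (.cons h2 .nil) => exact Or.inr (Or.inr ⟨_, h1, h2⟩)
  | .cons h1 (.cons h2 (.cons h3 q)) => simp [SimpleGraph.Walk.length_cons] at h

lemma distPower_two_adj_iff (G : SimpleGraph V) (u v : V) :
    (distPower G 2).Adj u v ↔ u ≠ v ∧ (G.Adj u v ∨ ∃ w, G.Adj u w ∧ G.Adj w v) := by
  constructor
  · rintro ⟨hne, hreach, hle⟩
    obtain ⟨p, hp⟩ := hreach.exists_walk_length_eq_dist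
    rcases walk_two p (by omega) with h | h | h
    · exact absurd h hne
    · exact ⟨hne, Or.inl h⟩
    · exact ⟨hne, Or.inr h⟩
  · rintro ⟨hne, h | ⟨w, h1, h2⟩⟩
    · exact ⟨hne, h.reachable, le_trans (by simpa using SimpleGraph.dist_le h.toWalk) one_le_two⟩
    · refine ⟨hne, ⟨.cons h1 (.cons h2 .nil)⟩, ?_⟩
      simpa using SimpleGraph.dist_le (SimpleGraph.Walk.cons h1 (SimpleGraph.Walk.cons h2 .nil))

lemma G_adj_leaf (n : ℕ) (i : Fin n) (x) :
    (distPower (starSubdiv n) 2).Adj (some (i, 2)) x ↔ x = some (i, 0) ∨ x = some (i, 1) := by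
  rw [distPower_two_adj_iff]
  constructor
  · rintro ⟨hne, h | ⟨w, h1, h2⟩⟩
    · exact Or.inr ((T_adj_leaf n i x).mp h)
    · obtain rfl := (T_adj_leaf n i w).mp h1
      rcases (T_adj_mid n i x).mp h2 with h | h
      · exact Or.inl h
      · exact absurd h.symm hne
  · rintro (rfl | rfl)
    · exact ⟨by simp, Or.inr ⟨some (i, 1), (T_adj_leaf n i _).mpr rfl,
        (T_adj_mid n i _).mpr (Or.inl rfl)⟩⟩
    · exact ⟨by simp, Or.inl ((T_adj_leaf n i _).mpr rfl)⟩

lemma G_adj_zero_zero (n : ℕ) (i j : Fin n) (hij : i ≠ j) :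
    (distPower (starSubdiv n) 2).Adj (some (i, 0)) (some (j, 0)) := by
  rw [distPower_two_adj_iff]
  refine ⟨by simp [hij], Or.inr ⟨none, ?_, ?_⟩⟩
  · exact ((T_adj_none n _).mpr ⟨i, rfl⟩).symm
  · exact (T_adj_none n _).mpr ⟨j, rfl⟩

lemma G_not_adj_zero_one (n : ℕ) (i j : Fin n) (hij : i ≠ j) :
    ¬ (distPower (starSubdiv n) 2).Adj (some (i, 0)) (some (j, 1)) := by
  rw [distPower_two_adj_iff]
  rintro ⟨hne, h | ⟨w, h1, h2⟩⟩
  · rcases (T_adj_zero n i _).mp h with h | h <;> simp_all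
  · rcases (T_adj_zero n i w).mp h1 with rfl | rfl
    · obtain ⟨k, hk⟩ := (T_adj_none n _).mp h2; simp_all
    · rcases (T_adj_mid n i _).mp h2 with h | h <;> simp_all

lemma G_not_adj_one_one (n : ℕ) (i j : Fin n) (hij : i ≠ j) :
    ¬ (distPower (starSubdiv n) 2).Adj (some (i, 1)) (some (j, 1)) := by
  rw [distPower_two_adj_iff]
  rintro ⟨hne, h | ⟨w, h1, h2⟩⟩
  · rcases (T_adj_mid n i _).mp h with h | h <;> simp_all
  · rcases (T_adj_mid n i w).mp h1 with rfl | rfl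
    · rcases (T_adj_zero n i _).mp h2 with h | h <;> simp_all
    · have := (T_adj_leaf n i _).mp h2; simp_all

lemma G_not_adj_one_zero (n : ℕ) (i j : Fin n) (hij : i ≠ j) :
    ¬ (distPower (starSubdiv n) 2).Adj (some (i, 1)) (some (j, 0)) := by
  rw [distPower_two_adj_iff]
  rintro ⟨hne, h | ⟨w, h1, h2⟩⟩
  · rcases (T_adj_mid n i _).mp h with h | h <;> simp_all
  · rcases (T_adj_mid n i w).mp h1 with rfl | rfl
    · rcases (T_adj_zero n i _).mp h2 with h | h <;> simp_all
    · have := (T_adj_leaf n i _).mp h2; simp_all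



lemma mem_oball_zero (H : V → V → Prop) (v w : V) : w ∈ oball H v 0 ↔ w = v := by
  simp [oball]

lemma mem_oball_one (H : V → V → Prop) (v w : V) : w ∈ oball H v 1 ↔ w = v ∨ H v w := by
  rw [show (1 : ℕ) = 0 + 1 from rfl]
  simp [oball, Set.mem_union]

lemma oball_succ (H : V → V → Prop) (v : V) (a : ℕ) :
    oball H v (a + 1) = oball H v a ∪ {w | ∃ x ∈ oball H v a, H x w} := rfl

lemma mem_oball_two (H : V → V → Prop) (v w : V) :
    w ∈ oball H v 2 ↔ w = v ∨ H v w ∨ ∃ x, H v x ∧ H x w := by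
  rw [show (2 : ℕ) = 1 + 1 from rfl, oball_succ, Set.mem_union]
  simp only [Set.mem_setOf_eq, mem_oball_one]
  constructor
  · rintro (h | ⟨x, (rfl | hx), hxw⟩)
    · exact h.imp id Or.inl
    · exact Or.inr (Or.inl hxw)
    · exact Or.inr (Or.inr ⟨x, hx, hxw⟩)
  · rintro (rfl | h | ⟨x, hx, hxw⟩)
    · exact Or.inl (Or.inl rfl)
    · exact Or.inl (Or.inr h)
    · exact Or.inr ⟨x, Or.inr hx, hxw⟩

lemma mem_oball_three (H : V → V → Prop) (v w : V) :
    w ∈ oball H v 3 ↔ w = v ∨ H v w ∨ (∃ x, H v x ∧ H x w) ∨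
      ∃ x y, H v x ∧ H x y ∧ H y w := by
  rw [show (3 : ℕ) = 2 + 1 from rfl, oball_succ, Set.mem_union]
  simp only [Set.mem_setOf_eq]
  have h2 : ∀ z, z ∈ oball H v 2 ↔ z = v ∨ H v z ∨ ∃ x, H v x ∧ H x z := mem_oball_two H v
  constructor
  · rintro (h | ⟨x, hx, hxw⟩)
    · rcases (h2 w).mp h with h | h | ⟨x, hx, h⟩
      exacts [Or.inl h, Or.inr (Or.inl h), Or.inr (Or.inr (Or.inl ⟨x, hx, h⟩))]
    · rcases (h2 x).mp hx with rfl | h | ⟨y, hy, h⟩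
      exacts [Or.inr (Or.inl hxw), Or.inr (Or.inr (Or.inl ⟨x, h, hxw⟩)),
        Or.inr (Or.inr (Or.inr ⟨y, x, hy, h, hxw⟩))]
  · rintro (h | h | ⟨x, hx, h⟩ | ⟨x, y, hx, hxy, h⟩)
    exacts [Or.inl ((h2 w).mpr (Or.inl h)), Or.inl ((h2 w).mpr (Or.inr (Or.inl h))),
      Or.inl ((h2 w).mpr (Or.inr (Or.inr ⟨x, hx, h⟩))),
      Or.inr ⟨y, (h2 y).mpr (Or.inr (Or.inr ⟨x, hx, hxy⟩)), h⟩]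

lemma dist_leaves (n : ℕ) (i j : Fin n) (hij : i ≠ j) :
    (distPower (starSubdiv n) 2).dist (some (i, 2)) (some (j, 2)) = 3 := by
  have e1 : (distPower (starSubdiv n) 2).Adj (some (i, 2)) (some (i, 0)) :=
    (G_adj_leaf n i _).mpr (Or.inl rfl)
  have e2 : (distPower (starSubdiv n) 2).Adj (some (i, 0)) (some (j, 0)) :=
    G_adj_zero_zero n i j hij
  have e3 : (distPower (starSubdiv n) 2).Adj (some (j, 0)) (some (j, 2)) :=
    ((G_adj_leaf n j _).mpr (Or.inl rfl)).symm
  have hle : (distPower (starSubdiv n) 2).dist (some (i, 2)) (some (j, 2)) ≤ 3 := by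
    simpa using SimpleGraph.dist_le (SimpleGraph.Walk.cons e1 (.cons e2 (.cons e3 .nil)))
  refine le_antisymm hle (by_contra fun hlt => ?_)
  push_neg at hlt
  obtain ⟨q, hq⟩ := (SimpleGraph.Walk.reachable
    (SimpleGraph.Walk.cons e1 (.cons e2 (.cons e3 .nil)))).exists_walk_length_eq_dist
  rcases walk_two q (by omega) with h | h | ⟨x, h1, h2⟩
  · simp_all
  · rcases (G_adj_leaf n i _).mp h with h | h <;> simp_all
  · rcases (G_adj_leaf n i x).mp h1 with rfl | rfl <;>
      rcases (G_adj_leaf n j _).mp h2.symm with h | h <;> simp_all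

lemma key (n : ℕ) (H : Option (Fin n × Fin 3) → Option (Fin n × Fin 3) → Prop)
    (hpo : IsPartialOrientation (distPower (starSubdiv n) 2) H)
    (i j : Fin n) (hij : i ≠ j) (a b : ℕ) (hab : a + b = 3) (ha : a ≤ 1)
    (w : Option (Fin n × Fin 3))
    (hu : w ∈ oball H (some (i, 2)) a) (hv : w ∈ oball H (some (j, 2)) b) :
    H (some (j, 0)) (some (i, 0)) := by
  interval_cases a
  · -- a = 0, b = 3
    obtain rfl := (mem_oball_zero H _ w).mp hu
    obtain rfl : b = 3 := by omega
    rcases (mem_oball_three H _ _).mp hv with h | h | ⟨x, h1, h2⟩ | ⟨x, y, h1, h2, h3⟩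
    · simp_all
    · rcases (G_adj_leaf n j _).mp (hpo h) with h | h <;> simp_all
    · rcases (G_adj_leaf n j x).mp (hpo h1) with rfl | rfl <;>
        rcases (G_adj_leaf n i _).mp (hpo h2).symm with h | h <;> simp_all
    · rcases (G_adj_leaf n j x).mp (hpo h1) with rfl | rfl <;>
        rcases (G_adj_leaf n i y).mp (hpo h3).symm with rfl | rfl
      · exact h2
      · exact absurd (hpo h2) (G_not_adj_zero_one n j i hij.symm)
      · exact absurd (hpo h2) (G_not_adj_one_zero n j i hij.symm)
      · exact absurd (hpo h2) (G_not_adj_one_one n j i hij.symm)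
  · -- a = 1, b = 2
    obtain rfl : b = 2 := by omega
    rcases (mem_oball_one H _ w).mp hu with rfl | hw
    · rcases (mem_oball_two H _ _).mp hv with h | h | ⟨x, h1, h2⟩
      · simp_all
      · rcases (G_adj_leaf n j _).mp (hpo h) with h | h <;> simp_all
      · rcases (G_adj_leaf n j x).mp (hpo h1) with rfl | rfl <;>
          rcases (G_adj_leaf n i _).mp (hpo h2).symm with h | h <;> simp_all
    · rcases (G_adj_leaf n i w).mp (hpo hw) with rfl | rfl <;>
        rcases (mem_oball_two H _ _).mp hv with h | h | ⟨x, h1, h2⟩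
      · simp_all
      · rcases (G_adj_leaf n j _).mp (hpo h) with h | h <;> simp_all
      · rcases (G_adj_leaf n j x).mp (hpo h1) with rfl | rfl
        · exact h2
        · exact absurd (hpo h2) (G_not_adj_one_zero n j i hij.symm)
      · simp_all
      · rcases (G_adj_leaf n j _).mp (hpo h) with h | h <;> simp_all
      · rcases (G_adj_leaf n j x).mp (hpo h1) with rfl | rfl
        · exact absurd (hpo h2) (G_not_adj_zero_one n j i hij.symm)
        · exact absurd (hpo h2) (G_not_adj_one_one n j i hij.symm)

/-- In any `3⁺`-guidance system for the square of the twice-subdivided star `K_{1,n}`,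
some vertex has outdegree at least `(n-1)/2`. -/
theorem starSubdiv_square_plusGuidance_outdeg (n : ℕ)
    (H : Option (Fin n × Fin 3) → Option (Fin n × Fin 3) → Prop)
    (hpo : IsPartialOrientation (distPower (starSubdiv n) 2) H)
    (hplus : IsPlusGuidance (distPower (starSubdiv n) 2) H 3) :
    ∃ u, ((n : ℝ) - 1) / 2 ≤ outdeg H u := by
  classical
  rcases Nat.eq_zero_or_pos n with rfl | hn
  · refine ⟨none, ?_⟩
    have : (0 : ℝ) ≤ outdeg H none := Nat.cast_nonneg _
    norm_num
    linarith
  -- the tournament on the clique {(i,0)}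
  have htour : ∀ i j : Fin n, i ≠ j →
      H (some (i, 0)) (some (j, 0)) ∨ H (some (j, 0)) (some (i, 0)) := by
    intro i j hij
    have hd := dist_leaves n i j hij
    obtain ⟨a, b, hab, w, hw1, hw2⟩ :=
      hplus (some (i, 2)) (some (j, 2)) (by omega) (by omega)
    rw [hd] at hab
    rcases le_or_gt a 1 with ha | ha
    · exact Or.inr (key n H hpo i j hij a b hab ha w hw1 hw2)
    · exact Or.inl (key n H hpo j i hij.symm b a (by omega) (by omega) w hw2 hw1)
  set d : Fin n → ℕ :=
    fun i => (Finset.univ.filter fun j => H (some (i, 0)) (some (j, 0))).card with hd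
  obtain ⟨i0, -, hmax⟩ := Finset.exists_max_image Finset.univ d ⟨⟨0, hn⟩, Finset.mem_univ _⟩
  refine ⟨some (i0, 0), ?_⟩
  -- d i0 ≤ outdeg
  have hout : (d i0 : ℝ) ≤ outdeg H (some (i0, 0)) := by
    have hsub : ((Finset.univ.filter fun j => H (some (i0, 0)) (some (j, 0))).image
        (fun j : Fin n => (some (j, 0) : Option (Fin n × Fin 3))) : Set (Option (Fin n × Fin 3)))
        ⊆ {v | H (some (i0, 0)) v} := by
      intro x hx
      simp only [Finset.coe_image, Set.mem_image, Finset.mem_coe, Finset.mem_filter] at hx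
      obtain ⟨j, ⟨-, hj⟩, rfl⟩ := hx
      exact hj
    have hinj : Function.Injective
        (fun j : Fin n => (some (j, 0) : Option (Fin n × Fin 3))) := by
      intro a b hab; simpa using hab
    have := Set.ncard_le_ncard hsub (Set.toFinite _)
    rw [Set.ncard_coe_finset, Finset.card_image_of_injective _ hinj] at this
    exact_mod_cast this
  -- counting: n*n - n ≤ 2 * n * d i0
  have hcount : n * n - n ≤ 2 * (n * d i0) := by
    set D := (Finset.univ : Finset (Fin n)).offDiag.filter
      (fun p => H (some (p.1, 0)) (some (p.2, 0))) with hD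
    have hcover : (Finset.univ : Finset (Fin n)).offDiag ⊆ D ∪ D.image Prod.swap := by
      intro p hp
      have hne : p.1 ≠ p.2 := (Finset.mem_offDiag.mp hp).2.2
      rcases htour p.1 p.2 hne with h | h
      · exact Finset.mem_union_left _ (Finset.mem_filter.mpr ⟨hp, h⟩)
      · refine Finset.mem_union_right _ (Finset.mem_image.mpr ⟨p.swap, ?_, p.swap_swap⟩)
        exact Finset.mem_filter.mpr ⟨Finset.mem_offDiag.mpr
          ⟨Finset.mem_univ _, Finset.mem_univ _, hne.symm⟩, h⟩
    have h1 : n * n - n ≤ 2 * D.card := by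
      have := Finset.card_le_card hcover
      have hcu : (Finset.univ : Finset (Fin n)).offDiag.card = n * n - n := by
        rw [Finset.offDiag_card]; simp
      calc n * n - n = (Finset.univ : Finset (Fin n)).offDiag.card := hcu.symm
        _ ≤ (D ∪ D.image Prod.swap).card := this
        _ ≤ D.card + (D.image Prod.swap).card := Finset.card_union_le _ _
        _ ≤ D.card + D.card := Nat.add_le_add_left Finset.card_image_le _
        _ = 2 * D.card := by ring
    have h2 : D.card ≤ ∑ i : Fin n, d i := by
      rw [Finset.card_eq_sum_card_fiberwise
        (f := Prod.fst) (t := Finset.univ) (fun x _ => Finset.mem_univ _)]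
      refine Finset.sum_le_sum fun i _ => ?_
      have : D.filter (fun p => p.1 = i) ⊆
          (Finset.univ.filter fun j => H (some (i, 0)) (some (j, 0))).image
            (fun j => (i, j)) := by
        intro p hp
        simp only [Finset.mem_filter, hD] at hp
        obtain ⟨⟨-, hR⟩, h1⟩ := hp
        refine Finset.mem_image.mpr ⟨p.2, Finset.mem_filter.mpr ⟨Finset.mem_univ _, ?_⟩, ?_⟩
        · rw [← h1]; exact hR
        · rw [← h1]
      calc (D.filter (fun p => p.1 = i)).card
          ≤ _ := Finset.card_le_card this
        _ ≤ d i := Finset.card_image_le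
    have h3 : ∑ i : Fin n, d i ≤ n * d i0 := by
      calc ∑ i : Fin n, d i ≤ Finset.univ.card • d i0 :=
            Finset.sum_le_card_nsmul _ _ _ (fun i _ => hmax i (Finset.mem_univ _))
        _ = n * d i0 := by simp [mul_comm]
    omega
  -- conclude over ℝ
  have hn1 : (1 : ℝ) ≤ (n : ℝ) := by exact_mod_cast hn
  have hc : (n : ℝ) * (n : ℝ) - (n : ℝ) ≤ 2 * ((n : ℝ) * (d i0 : ℝ)) := by
    have hnn : n ≤ n * n := Nat.le_mul_of_pos_left n hn
    have := (Nat.cast_le (α := ℝ)).mpr hcount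
    push_cast [Nat.cast_sub hnn] at this
    convert this using 2 <;> push_cast <;> ring
  have : ((n : ℝ) - 1) / 2 ≤ (d i0 : ℝ) := by
    rw [div_le_iff₀ (by norm_num)]
    nlinarith [hn1]
  linarith
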